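/- arXiv:2209.14954 — 2 statements merged into one kernel-verified Lean document; each statement's English description precedes it below -/
import Mathlib

section
/- Let F ∈ ℝ^{k×p} have full row rank, G ∈ ℝ^{q×l} have full column rank, A ∈ ℝ^{p×q}, H ∈ ℝ^{k×l}. Define X̂ = A + Fᵀ(FFᵀ)⁻¹(H − FAG)(GᵀG)⁻¹Gᵀ. Then F X̂ G = H, and for every X ∈ ℝ^{p×q} with FXG = H one has ‖A − X̂‖_F ≤ ‖A − X‖_F. -/
open Matrix BigOperators

noncomputable def frob {m n : Type*} [Fintype m] [Fintype n] (A : Matrix m n ℝ) : ℝ :=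
  Real.sqrt (∑ i, ∑ j, (A i j) ^ 2)

lemma aux_isUnit_det {n : ℕ} (M : Matrix (Fin n) (Fin n) ℝ) (h : M.rank = n) : IsUnit M.det := by
  have hr : LinearMap.range M.mulVecLin = ⊤ := by
    apply Submodule.eq_top_of_finrank_eq
    rw [← Matrix.rank, h]
    simp [Module.finrank_fintype_fun_eq_card]
  have hs : Function.Surjective M.mulVec := by
    intro y
    obtain ⟨x, hx⟩ := (LinearMap.range_eq_top.mp hr) y
    exact ⟨x, hx⟩
  exact (Matrix.isUnit_iff_isUnit_det M).mp (Matrix.mulVec_surjective_iff_isUnit.mp hs)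

lemma aux_sum_trace {p q : ℕ} (B C : Matrix (Fin p) (Fin q) ℝ) :
    ∑ i, ∑ j, B i j * C i j = Matrix.trace (Bᵀ * C) := by
  rw [Matrix.trace]
  simp only [Matrix.diag_apply, Matrix.mul_apply, Matrix.transpose_apply]
  exact Finset.sum_comm

theorem two_sided_product_constrained_projection {k p q l : ℕ}
    (F : Matrix (Fin k) (Fin p) ℝ) (G : Matrix (Fin q) (Fin l) ℝ)
    (A : Matrix (Fin p) (Fin q) ℝ) (H : Matrix (Fin k) (Fin l) ℝ)
    (hF : F.rank = k) (hG : G.rank = l) :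
    let Xhat := A + Fᵀ * (F * Fᵀ)⁻¹ * (H - F * A * G) * (Gᵀ * G)⁻¹ * Gᵀ
    F * Xhat * G = H ∧
      ∀ X : Matrix (Fin p) (Fin q) ℝ, F * X * G = H → frob (A - Xhat) ≤ frob (A - X) := by
  intro Xhat
  have hFdet : IsUnit (F * Fᵀ).det :=
    aux_isUnit_det _ (by rw [Matrix.rank_self_mul_transpose]; exact hF)
  have hGdet : IsUnit (Gᵀ * G).det :=
    aux_isUnit_det _ (by rw [Matrix.rank_transpose_mul_self]; exact hG)
  set N := Fᵀ * (F * Fᵀ)⁻¹ * (H - F * A * G) * (Gᵀ * G)⁻¹ * Gᵀ with hN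
  have hFN : F * N * G = H - F * A * G := by
    have h1 : F * N * G =
        (F * Fᵀ * (F * Fᵀ)⁻¹) * ((H - F * A * G) * ((Gᵀ * G)⁻¹ * (Gᵀ * G))) := by
      simp only [hN, Matrix.mul_assoc]
    rw [h1, Matrix.mul_nonsing_inv _ hFdet, Matrix.nonsing_inv_mul _ hGdet,
      Matrix.one_mul, Matrix.mul_one]
  have hpart1 : F * Xhat * G = H := by
    show F * (A + N) * G = H
    rw [Matrix.mul_add, Matrix.add_mul, hFN]
    abel
  refine ⟨hpart1, ?_⟩
  intro X hX
  set D := Xhat - X with hD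
  have hFDG : F * D * G = 0 := by
    rw [hD, Matrix.mul_sub, Matrix.sub_mul, hpart1, hX, sub_self]
  have hAXhat : A - Xhat = -N := by
    show A - (A + N) = -N
    abel
  have cross : ∑ i, ∑ j, (A - Xhat) i j * D i j = 0 := by
    rw [aux_sum_trace, hAXhat, Matrix.transpose_neg, Matrix.neg_mul, Matrix.trace_neg,
      neg_eq_zero]
    have hNT : Nᵀ * D = G * (((Gᵀ * G)⁻¹)ᵀ * ((H - F * A * G)ᵀ * ((F * Fᵀ)⁻¹)ᵀ)) * (F * D) := by
      simp only [hN, Matrix.transpose_mul, Matrix.transpose_transpose, Matrix.mul_assoc]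
    rw [hNT, Matrix.trace_mul_comm]
    simp only [← Matrix.mul_assoc]
    rw [hFDG]
    simp
  have hsum : ∑ i, ∑ j, (A - X) i j ^ 2
      = (∑ i, ∑ j, (A - Xhat) i j ^ 2) + 2 * (∑ i, ∑ j, (A - Xhat) i j * D i j)
        + ∑ i, ∑ j, D i j ^ 2 := by
    rw [Finset.mul_sum, ← Finset.sum_add_distrib, ← Finset.sum_add_distrib]
    refine Finset.sum_congr rfl fun i _ => ?_
    rw [Finset.mul_sum, ← Finset.sum_add_distrib, ← Finset.sum_add_distrib]
    refine Finset.sum_congr rfl fun j _ => ?_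
    have hAX : (A - X) i j = (A - Xhat) i j + D i j := by
      simp [hD, Matrix.sub_apply]
    rw [hAX]; ring
  have hle : ∑ i, ∑ j, (A - Xhat) i j ^ 2 ≤ ∑ i, ∑ j, (A - X) i j ^ 2 := by
    rw [hsum, cross]
    have : (0:ℝ) ≤ ∑ i, ∑ j, D i j ^ 2 :=
      Finset.sum_nonneg fun i _ => Finset.sum_nonneg fun j _ => sq_nonneg _
    linarith
  exact Real.sqrt_le_sqrt hle
end

section
/- Suppose (X₁, λ₁) and (X₂, λ₂) both satisfy S_B(S_B Xᵢ S_C − A)S_C + λᵢ Xᵢ = 0 and ‖X₁‖_F = ‖X₂‖_F. Then ‖A − S_B X₂ S_C‖_F² − ‖A − S_B X₁ S_C‖_F² = ((λ₁ − λ₂)/2) ‖X₁ − X₂‖_F². In particular, λ₁ > λ₂ implies ‖A − S_B X₁ S_C‖_F < ‖A − S_B X₂ S_C‖_F or X₁ = X₂. -/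
open Matrix BigOperators

lemma frob_sq {m n : Type*} [Fintype m] [Fintype n] (A : Matrix m n ℝ) :
    frob A ^ 2 = ∑ i, ∑ j, (A i j) ^ 2 := by
  apply Real.sq_sqrt
  positivity

lemma frob_nonneg {m n : Type*} [Fintype m] [Fintype n] (A : Matrix m n ℝ) :
    0 ≤ frob A := Real.sqrt_nonneg _

theorem norm_constrained_stationary_comparison {s t : ℕ}
    (β : Fin s → ℝ) (γ : Fin t → ℝ) (hβ : ∀ i, 0 < β i) (hγ : ∀ j, 0 < γ j)
    (A X₁ X₂ : Matrix (Fin s) (Fin t) ℝ) (lam₁ lam₂ : ℝ)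
    (SB : Matrix (Fin s) (Fin s) ℝ) (SC : Matrix (Fin t) (Fin t) ℝ)
    (hSB : SB = Matrix.diagonal β) (hSC : SC = Matrix.diagonal γ)
    (h₁ : SB * (SB * X₁ * SC - A) * SC + lam₁ • X₁ = 0)
    (h₂ : SB * (SB * X₂ * SC - A) * SC + lam₂ • X₂ = 0)
    (hnorm : frob X₁ = frob X₂) :
    frob (A - SB * X₂ * SC) ^ 2 - frob (A - SB * X₁ * SC) ^ 2
        = (lam₁ - lam₂) / 2 * frob (X₁ - X₂) ^ 2 ∧
      (lam₁ > lam₂ →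
        frob (A - SB * X₁ * SC) < frob (A - SB * X₂ * SC) ∨ X₁ = X₂) := by
  subst hSB hSC
  -- entrywise equations
  have e₁ : ∀ i j, β i * (β i * X₁ i j * γ j - A i j) * γ j + lam₁ * X₁ i j = 0 := by
    intro i j
    have := congrFun (congrFun h₁ i) j
    simpa [Matrix.add_apply, Matrix.mul_diagonal, Matrix.diagonal_mul, Matrix.sub_apply,
      Matrix.smul_apply, Matrix.zero_apply, mul_comm, mul_left_comm, mul_assoc] using this
  have e₂ : ∀ i j, β i * (β i * X₂ i j * γ j - A i j) * γ j + lam₂ * X₂ i j = 0 := by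
    intro i j
    have := congrFun (congrFun h₂ i) j
    simpa [Matrix.add_apply, Matrix.mul_diagonal, Matrix.diagonal_mul, Matrix.sub_apply,
      Matrix.smul_apply, Matrix.zero_apply, mul_comm, mul_left_comm, mul_assoc] using this
  -- per-entry identity
  have key : ∀ i j,
      (A i j - β i * X₂ i j * γ j) ^ 2 - (A i j - β i * X₁ i j * γ j) ^ 2
        = (lam₁ - lam₂) / 2 * (X₁ i j - X₂ i j) ^ 2
          + (lam₁ + lam₂) / 2 * ((X₁ i j) ^ 2 - (X₂ i j) ^ 2) := by
    intro i j
    linear_combination (X₂ i j - X₁ i j) * (e₁ i j) + (X₂ i j - X₁ i j) * (e₂ i j)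
  -- norm equality of sums of squares
  have hP : ∑ i, ∑ j, (X₁ i j) ^ 2 = ∑ i, ∑ j, (X₂ i j) ^ 2 := by
    have := congrArg (fun x : ℝ => x ^ 2) hnorm
    simpa [frob_sq] using this
  -- entry rewriting of frob squares
  have hf₂ : frob (A - Matrix.diagonal β * X₂ * Matrix.diagonal γ) ^ 2
      = ∑ i, ∑ j, (A i j - β i * X₂ i j * γ j) ^ 2 := by
    rw [frob_sq]
    apply Finset.sum_congr rfl; intro i _; apply Finset.sum_congr rfl; intro j _
    simp [Matrix.sub_apply, Matrix.mul_diagonal, Matrix.diagonal_mul, mul_assoc]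
  have hf₁ : frob (A - Matrix.diagonal β * X₁ * Matrix.diagonal γ) ^ 2
      = ∑ i, ∑ j, (A i j - β i * X₁ i j * γ j) ^ 2 := by
    rw [frob_sq]
    apply Finset.sum_congr rfl; intro i _; apply Finset.sum_congr rfl; intro j _
    simp [Matrix.sub_apply, Matrix.mul_diagonal, Matrix.diagonal_mul, mul_assoc]
  have hfd : frob (X₁ - X₂) ^ 2 = ∑ i, ∑ j, (X₁ i j - X₂ i j) ^ 2 := by
    rw [frob_sq]; simp [Matrix.sub_apply]
  -- main identity
  have main : frob (A - Matrix.diagonal β * X₂ * Matrix.diagonal γ) ^ 2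
      - frob (A - Matrix.diagonal β * X₁ * Matrix.diagonal γ) ^ 2
      = (lam₁ - lam₂) / 2 * frob (X₁ - X₂) ^ 2 := by
    rw [hf₁, hf₂, hfd]
    have hsum : ∑ i, ∑ j, ((A i j - β i * X₂ i j * γ j) ^ 2
          - (A i j - β i * X₁ i j * γ j) ^ 2)
        = ∑ i, ∑ j, ((lam₁ - lam₂) / 2 * (X₁ i j - X₂ i j) ^ 2
          + (lam₁ + lam₂) / 2 * ((X₁ i j) ^ 2 - (X₂ i j) ^ 2)) := by
      apply Finset.sum_congr rfl; intro i _; apply Finset.sum_congr rfl; intro j _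
      exact key i j
    simp only [Finset.sum_sub_distrib, Finset.sum_add_distrib, ← Finset.mul_sum] at hsum ⊢
    rw [hsum]
    rw [hP]
    ring
  refine ⟨main, ?_⟩
  intro hlt
  by_cases hX : X₁ = X₂
  · exact Or.inr hX
  · left
    have hpos : 0 < frob (X₁ - X₂) ^ 2 := by
      rw [hfd]
      obtain ⟨i, j, hij⟩ : ∃ i j, X₁ i j ≠ X₂ i j := by
        by_contra h
        push_neg at h
        exact hX (by ext i j; exact h i j)
      have hne : X₁ i j - X₂ i j ≠ 0 := sub_ne_zero.mpr hij
      have : 0 < (X₁ i j - X₂ i j) ^ 2 := by positivity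
      have h1 : 0 < ∑ j', (X₁ i j' - X₂ i j') ^ 2 :=
        Finset.sum_pos' (fun _ _ => by positivity) ⟨j, Finset.mem_univ j, this⟩
      exact Finset.sum_pos' (fun _ _ => by positivity)
        ⟨i, Finset.mem_univ i, h1⟩
    have hgt : frob (A - Matrix.diagonal β * X₁ * Matrix.diagonal γ) ^ 2
        < frob (A - Matrix.diagonal β * X₂ * Matrix.diagonal γ) ^ 2 := by
      nlinarith [main]
    exact lt_of_pow_lt_pow_left₀ 2 (frob_nonneg _) hgt
end
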